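/- Let T be a self-adjoint linear endomorphism of V. Then T ∘ T = 0 if and only if there exists a null vector l ∈ V such that T(w) = 0 for every w ∈ {l}⊥. -/

import Mathlib

/-- Let `V` be a finite-dimensional real vector space with a nondegenerate
symmetric bilinear form `g` of Lorentzian signature (witnessed by an orthonormal-type basis
`b` with `g (b 0) (b 0) = -1` and `g (b i) (b i) = 1` otherwise).  For a self-adjoint
endomorphism `T`, `T ∘ T = 0` iff there is a null vector `l` with `T w = 0` for all
`w ∈ {l}⊥`. -/
theorem stmt0 {V : Type*} [AddCommGroup V] [Module ℝ V]
    {n : ℕ} (hn : 2 ≤ n)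
    (g : V →ₗ[ℝ] V →ₗ[ℝ] ℝ)
    (hg_symm : ∀ x y : V, g x y = g y x)
    (b : Module.Basis (Fin n) ℝ V)
    (hb : ∀ i j : Fin n, g (b i) (b j) =
      if i = j then (if (i : ℕ) = 0 then (-1 : ℝ) else 1) else 0)
    (T : V →ₗ[ℝ] V)
    (hT : ∀ x y : V, g (T x) y = g x (T y)) :
    T ∘ₗ T = 0 ↔
      ∃ l : V, l ≠ 0 ∧ g l l = 0 ∧ ∀ w : V, g l w = 0 → T w = 0 := by
  set i0 : Fin n := ⟨0, by omega⟩ with hi0def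
  set i1 : Fin n := ⟨1, by omega⟩ with hi1def
  -- coordinate formula
  have hcoord : ∀ x y : V, g x y =
      ∑ i : Fin n, (if (i : ℕ) = 0 then (-1:ℝ) else 1) * (b.repr x i) * (b.repr y i) := by
    intro x y
    conv_lhs => rw [← b.sum_repr x, ← b.sum_repr y]
    simp only [map_sum, map_smul, LinearMap.coe_sum, Finset.sum_apply, LinearMap.smul_apply,
      smul_eq_mul, hb, mul_ite, mul_zero]
    refine Finset.sum_congr rfl fun i _ => ?_
    rw [Finset.sum_ite_eq' Finset.univ i]
    simp only [Finset.mem_univ, if_true]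
    split <;> ring
  -- nondegeneracy
  have hnd : ∀ x : V, (∀ y : V, g x y = 0) → x = 0 := by
    intro x hx
    have hj : ∀ j : Fin n, b.repr x j = 0 := by
      intro j
      have h := hx (b j)
      rw [hcoord] at h
      simp only [Module.Basis.repr_self, Finsupp.single_apply, mul_ite, mul_one, mul_zero] at h
      rw [Finset.sum_ite_eq Finset.univ j] at h
      simp only [Finset.mem_univ, if_true] at h
      split at h <;> linarith
    exact b.repr.map_eq_zero_iff.mp (Finsupp.ext hj)
  -- null vectors with vanishing 0-coordinate are zero
  have hzero : ∀ z : V, g z z = 0 → b.repr z i0 = 0 → z = 0 := by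
    intro z hz hz0
    rw [hcoord] at hz
    have hterm : ∀ i ∈ (Finset.univ : Finset (Fin n)),
        0 ≤ (if (i:ℕ) = 0 then (-1:ℝ) else 1) * (b.repr z i) * (b.repr z i) := by
      intro i _
      by_cases hi : (i:ℕ) = 0
      · have : i = i0 := Fin.ext hi
        simp [hi, this, hz0]
      · simp only [hi, if_false, one_mul]
        exact mul_self_nonneg _
    have hall := (Finset.sum_eq_zero_iff_of_nonneg hterm).mp hz
    have hj : ∀ j : Fin n, b.repr z j = 0 := by
      intro j
      by_cases hj0 : (j:ℕ) = 0
      · have : j = i0 := Fin.ext hj0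
        rw [this]; exact hz0
      · have h := hall j (Finset.mem_univ j)
        simp only [hj0, if_false, one_mul] at h
        exact mul_self_eq_zero.mp h
    exact b.repr.map_eq_zero_iff.mp (Finsupp.ext hj)
  -- totally isotropic pairs are parallel
  have hiso : ∀ u v : V, u ≠ 0 → g u u = 0 → g v v = 0 → g u v = 0 →
      ∃ c : ℝ, v = c • u := by
    intro u v hu huu hvv huv
    have hvu : g v u = 0 := by rw [hg_symm]; exact huv
    have hu0 : b.repr u i0 ≠ 0 := fun h => hu (hzero u huu h)
    refine ⟨b.repr v i0 / b.repr u i0, ?_⟩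
    have hw : v - (b.repr v i0 / b.repr u i0) • u = 0 := by
      apply hzero
      · simp only [map_sub, map_smul, LinearMap.sub_apply, LinearMap.smul_apply, smul_eq_mul,
          huu, hvv, huv, hvu, mul_zero, sub_zero, zero_sub, neg_zero, sub_self]
      · simp only [map_sub, map_smul, Finsupp.coe_sub, Finsupp.coe_smul, Pi.sub_apply,
          Pi.smul_apply, smul_eq_mul]
        field_simp
        simp
    exact sub_eq_zero.mp hw
  constructor
  · intro hTT
    have hTT' : ∀ y : V, T (T y) = 0 := by
      intro y
      have := LinearMap.ext_iff.mp hTT y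
      simpa using this
    by_cases hT0 : T = 0
    · refine ⟨b i0 + b i1, ?_, ?_, ?_⟩
      · intro h
        have := congrArg (fun v => b.repr v i1) h
        have h01 : i0 ≠ i1 := by
          intro h'; have := congrArg Fin.val h'; simp [hi0def, hi1def] at this
        simp [Module.Basis.repr_self, Finsupp.single_apply, h01] at this
      · have h01 : i0 ≠ i1 := by
          intro h'; have := congrArg Fin.val h'; simp [hi0def, hi1def] at this
        simp [map_add, hb, h01, h01.symm, hi0def, hi1def]
      · intro w _; simp [hT0]
    · obtain ⟨x, hx⟩ : ∃ x, T x ≠ 0 := by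
        by_contra h; push_neg at h; exact hT0 (LinearMap.ext h)
      have hnull : ∀ y : V, g (T y) (T y) = 0 := by
        intro y; rw [hT, hTT', map_zero]
      have horth : ∀ y z : V, g (T y) (T z) = 0 := by
        intro y z; rw [hT, hTT', map_zero]
      refine ⟨T x, hx, hnull x, ?_⟩
      intro w hw
      apply hnd
      intro y
      obtain ⟨c, hc⟩ := hiso (T x) (T y) hx (hnull x) (hnull y) (horth x y)
      rw [hT, hc, map_smul, smul_eq_mul, hg_symm w (T x), hw, mul_zero]
  · rintro ⟨l, hl, hll, hlp⟩
    apply LinearMap.ext; intro x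
    simp only [LinearMap.comp_apply, LinearMap.zero_apply]
    apply hlp
    have hTl : T l = 0 := hlp l hll
    rw [hg_symm l (T x), hT, hTl, map_zero]
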